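/- Let A = ⊕_{n≥0} A^n and B = ⊕_{n≥0} B^n be unital differential graded algebras over a field k (with differentials of degree +1 squaring to zero and satisfying the graded Leibniz rule), and let φ: A → B be a morphism of unital dg algebras. Assume ker(d_A) ∩ A⁰ = k·1_A, H¹(A) = 0, H²(A) = 0, ker(d_B) ∩ B⁰ = k·1_B, and H¹(B) = 0. Then there exist dg subalgebras 𝒜 ⊆ A and ℬ ⊆ B such that: (1) 𝒜⁰ = k·1_A, 𝒜¹ = 0, 𝒜² = 0, ℬ⁰ = k·1_B, ℬ¹ = 0; (2) the inclusion maps 𝒜 ↪ A and ℬ ↪ B are quasi-isomorphisms (induce isomorphisms on cohomology in every degree); (3) φ(𝒜) ⊆ ℬ. -/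
import Mathlib


open DirectSum

theorem construct {k A : Type} [Field k] [Ring A] [Algebra k A]
    (𝒜 : ℕ → Submodule k A) [GradedAlgebra 𝒜] (dA : A →ₗ[k] A)
    (m : ℕ) (hm : 1 ≤ m)
    (hd2 : dA ∘ₗ dA = 0)
    (hd1 : dA 1 = 0)
    (hdeg : ∀ n x, x ∈ 𝒜 n → dA x ∈ 𝒜 (n + 1))
    (hker0 : ∀ x ∈ 𝒜 0, dA x = 0 → ∃ c : k, x = c • (1 : A))
    (hH : ∀ j, 1 ≤ j → j < m → ∀ x ∈ 𝒜 j, dA x = 0 → ∃ y ∈ 𝒜 (j - 1), x = dA y) :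
    ∃ M : Submodule k A,
      (1 : A) ∈ M ∧
      (∀ x ∈ M, ∀ y ∈ M, x * y ∈ M) ∧
      (∀ x ∈ M, dA x ∈ M) ∧
      (∀ x ∈ M, ∀ n, ((DirectSum.decompose 𝒜 x n : 𝒜 n) : A) ∈ M) ∧
      (∀ n, m + 1 ≤ n → ∀ x ∈ 𝒜 n, x ∈ M) ∧
      (∀ x ∈ M, x ∈ 𝒜 0 → ∃ c : k, x = c • (1 : A)) ∧
      (∀ n, 1 ≤ n → n < m → ∀ x ∈ M, x ∈ 𝒜 n → x = 0) ∧
      (∀ n, ∀ x ∈ 𝒜 n, dA x = 0 →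
        ∃ y z, y ∈ M ∧ y ∈ 𝒜 n ∧ dA y = 0 ∧ z ∈ 𝒜 (n - 1) ∧ x = y + dA z) ∧
      (∀ n, ∀ x, x ∈ M → x ∈ 𝒜 n → (∃ z ∈ 𝒜 (n - 1), x = dA z) →
        ∃ w, w ∈ M ∧ w ∈ 𝒜 (n - 1) ∧ x = dA w) ∧
      (∀ x ∈ M, x ∈ Submodule.span k ({1} ∪ ⋃ n, ((𝒜 (n + m) : Submodule k A) : Set A))) := by
  have hd2' : ∀ x : A, dA (dA x) = 0 := fun x => by
    have := LinearMap.congr_fun hd2 x; simpa using this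
  have hm1 : m - 1 + 1 = m := Nat.succ_pred_eq_of_pos hm
  -- complement C of dA(𝒜 (m-1)) inside 𝒜 m
  set p : Submodule k A := Submodule.map dA (𝒜 (m - 1)) with hp
  set q : Submodule k ↥(𝒜 m) := Submodule.comap (𝒜 m).subtype p with hq
  obtain ⟨q', hq'⟩ := Submodule.exists_isCompl q
  set C : Submodule k A := Submodule.map (𝒜 m).subtype q' with hC
  have hCsub : ∀ x ∈ C, x ∈ 𝒜 m := by
    rintro x ⟨u, hu, rfl⟩; exact u.2
  have hCd : ∀ x, x ∈ C → x ∈ p → x = 0 := by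
    rintro x ⟨u, hu, rfl⟩ hxp
    have huq : u ∈ q := hxp
    have : u ∈ q ⊓ q' := ⟨huq, hu⟩
    rw [hq'.inf_eq_bot] at this
    simp [Submodule.mem_bot] at this
    simp [this]
  have hdecomp : ∀ x ∈ 𝒜 m, ∃ c z, c ∈ C ∧ z ∈ 𝒜 (m - 1) ∧ x = c + dA z := by
    intro x hx
    have : (⟨x, hx⟩ : ↥(𝒜 m)) ∈ q ⊔ q' := by rw [hq'.sup_eq_top]; trivial
    obtain ⟨a, ha, b, hb, hab⟩ := Submodule.mem_sup.mp this
    obtain ⟨z, hz, hza⟩ := ha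
    have hbC : (b : A) ∈ C := Submodule.mem_map_of_mem hb
    have hxab : x = (a : A) + (b : A) := by
      have := congrArg (Subtype.val) hab
      simpa using this.symm
    have hza' : dA z = (a : A) := hza
    exact ⟨(b : A), z, hbC, hz, by rw [hxab, ← hza', add_comm]⟩
  -- the generating set and the submodule M
  set G : Set A := {1} ∪ (C : Set A) ∪ ⋃ n, ((𝒜 (n + m + 1) : Submodule k A) : Set A) with hG
  set M : Submodule k A := Submodule.span k G with hM
  have h1G : (1 : A) ∈ G := Or.inl (Or.inl rfl)
  have h1M : (1 : A) ∈ M := Submodule.subset_span h1G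
  have hCM : ∀ x ∈ C, x ∈ M := fun x hx => Submodule.subset_span (Or.inl (Or.inr hx))
  have hhigh : ∀ n, m + 1 ≤ n → ∀ x ∈ 𝒜 n, x ∈ M := by
    intro n hn x hx
    refine Submodule.subset_span (Or.inr (Set.mem_iUnion.mpr ⟨n - (m + 1), ?_⟩))
    have : n - (m + 1) + m + 1 = n := by omega
    rw [this]; exact hx
  -- homogeneity of generators
  have hgen : ∀ g ∈ G, g = 1 ∨ ∃ j, m ≤ j ∧ g ∈ 𝒜 j := by
    rintro g ((hg | hg) | hg)
    · exact Or.inl hg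
    · exact Or.inr ⟨m, le_rfl, hCsub g hg⟩
    · obtain ⟨n, hn⟩ := Set.mem_iUnion.mp hg
      exact Or.inr ⟨n + m + 1, by omega, hn⟩
  have hgenhom : ∀ g ∈ G, ∃ j, g ∈ 𝒜 j := by
    intro g hg
    rcases hgen g hg with rfl | ⟨j, _, hj⟩
    · exact ⟨0, SetLike.one_mem_graded 𝒜⟩
    · exact ⟨j, hj⟩
  -- multiplicative closure
  have hmul : ∀ x ∈ M, ∀ y ∈ M, x * y ∈ M := by
    intro x hx y hy
    induction hx using Submodule.span_induction with
    | mem g hg =>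
      induction hy using Submodule.span_induction with
      | mem g' hg' =>
        rcases hgen g hg with rfl | ⟨j, hjm, hj⟩
        · rw [one_mul]; exact Submodule.subset_span hg'
        · rcases hgen g' hg' with rfl | ⟨j', hjm', hj'⟩
          · rw [mul_one]; exact Submodule.subset_span hg
          · exact hhigh (j + j') (by omega) _ (SetLike.mul_mem_graded hj hj')
      | zero => rw [mul_zero]; exact zero_mem _
      | add a b _ _ ha hb => rw [mul_add]; exact add_mem ha hb
      | smul r a _ h => rw [mul_smul_comm]; exact Submodule.smul_mem _ _ h
    | zero => rw [zero_mul]; exact zero_mem _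
    | add a b _ _ ha hb => rw [add_mul]; exact add_mem ha hb
    | smul r a _ h => rw [smul_mul_assoc]; exact Submodule.smul_mem _ _ h
  -- closure under the differential
  have hdM : ∀ x ∈ M, dA x ∈ M := by
    intro x hx
    induction hx using Submodule.span_induction with
    | mem g hg =>
      rcases hgen g hg with rfl | ⟨j, hjm, hj⟩
      · rw [hd1]; exact zero_mem _
      · exact hhigh (j + 1) (by omega) _ (hdeg j g hj)
    | zero => rw [map_zero]; exact zero_mem _
    | add a b _ _ ha hb => rw [map_add]; exact add_mem ha hb
    | smul r a _ h => rw [map_smul]; exact Submodule.smul_mem _ _ h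
  -- decompositions of homogeneous elements
  have hdec : ∀ (i : ℕ) (g : A), g ∈ 𝒜 i → ∀ n,
      ((DirectSum.decompose 𝒜 g n : 𝒜 n) : A) = if n = i then g else 0 := by
    intro i g hg n
    split_ifs with h
    · subst h; exact DirectSum.decompose_of_mem_same 𝒜 hg
    · exact DirectSum.decompose_of_mem_ne 𝒜 hg (Ne.symm h)
  -- gradedness of M
  have hgr : ∀ x ∈ M, ∀ n, ((DirectSum.decompose 𝒜 x n : 𝒜 n) : A) ∈ M := by
    intro x hx
    induction hx using Submodule.span_induction with
    | mem g hg =>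
      obtain ⟨i, hi⟩ := hgenhom g hg
      intro n
      rw [hdec i g hi n]
      split_ifs
      · exact Submodule.subset_span hg
      · exact zero_mem _
    | zero => intro n; simp
    | add a b _ _ ha hb =>
      intro n
      rw [DirectSum.decompose_add, DirectSum.add_apply, Submodule.coe_add]
      exact add_mem (ha n) (hb n)
    | smul r a _ h =>
      intro n
      rw [DirectSum.decompose_smul, DFinsupp.smul_apply, Submodule.coe_smul]
      exact Submodule.smul_mem _ _ (h n)
  -- the key structural lemma on components of elements of M
  have hQ : ∀ x ∈ M,
      ((DirectSum.decompose 𝒜 x 0 : 𝒜 0) : A) ∈ Submodule.span k {(1 : A)} ∧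
      (∀ j, 1 ≤ j → j < m → ((DirectSum.decompose 𝒜 x j : 𝒜 j) : A) = 0) ∧
      ((DirectSum.decompose 𝒜 x m : 𝒜 m) : A) ∈ C := by
    intro x hx
    induction hx using Submodule.span_induction with
    | mem g hg =>
      rcases hg with (hg | hg) | hg
      · rw [Set.mem_singleton_iff] at hg; subst hg
        have h1 : (1 : A) ∈ 𝒜 0 := SetLike.one_mem_graded 𝒜
        refine ⟨?_, ?_, ?_⟩
        · rw [hdec 0 1 h1 0]; simp [Submodule.mem_span_singleton_self]
        · intro j h1j hjm; rw [hdec 0 1 h1 j, if_neg (by omega : ¬ j = 0)]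
        · rw [hdec 0 1 h1 m, if_neg (by omega : ¬ m = 0)]; exact zero_mem _
      · have hj : g ∈ 𝒜 m := hCsub g hg
        refine ⟨?_, ?_, ?_⟩
        · rw [hdec m g hj 0, if_neg (by omega : ¬ (0:ℕ) = m)]; exact zero_mem _
        · intro i h1i him; rw [hdec m g hj i, if_neg (by omega : ¬ i = m)]
        · rw [hdec m g hj m, if_pos rfl]; exact hg
      · obtain ⟨n, hn⟩ := Set.mem_iUnion.mp hg
        refine ⟨?_, ?_, ?_⟩
        · rw [hdec _ g hn 0, if_neg (by omega : ¬ (0:ℕ) = n + m + 1)]; exact zero_mem _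
        · intro i h1i him; rw [hdec _ g hn i, if_neg (by omega : ¬ i = n + m + 1)]
        · rw [hdec _ g hn m, if_neg (by omega : ¬ m = n + m + 1)]; exact zero_mem _
    | zero => refine ⟨by simp, by intros; simp, by simp⟩
    | add a b _ _ ha hb =>
      refine ⟨?_, ?_, ?_⟩
      · rw [DirectSum.decompose_add, DirectSum.add_apply, Submodule.coe_add]
        exact add_mem ha.1 hb.1
      · intro j h1 h2
        rw [DirectSum.decompose_add, DirectSum.add_apply, Submodule.coe_add,
          ha.2.1 j h1 h2, hb.2.1 j h1 h2, add_zero]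
      · rw [DirectSum.decompose_add, DirectSum.add_apply, Submodule.coe_add]
        exact add_mem ha.2.2 hb.2.2
    | smul r a _ h =>
      refine ⟨?_, ?_, ?_⟩
      · rw [DirectSum.decompose_smul, DFinsupp.smul_apply, Submodule.coe_smul]
        exact Submodule.smul_mem _ _ h.1
      · intro j h1 h2
        rw [DirectSum.decompose_smul, DFinsupp.smul_apply, Submodule.coe_smul,
          h.2.1 j h1 h2, smul_zero]
      · rw [DirectSum.decompose_smul, DFinsupp.smul_apply, Submodule.coe_smul]
        exact Submodule.smul_mem _ _ h.2.2
  -- consequences of hQ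
  have hf0 : ∀ x ∈ M, x ∈ 𝒜 0 → ∃ c : k, x = c • (1 : A) := by
    intro x hx h0
    have := (hQ x hx).1
    rw [DirectSum.decompose_of_mem_same 𝒜 h0] at this
    obtain ⟨c, hc⟩ := Submodule.mem_span_singleton.mp this
    exact ⟨c, hc.symm⟩
  have hfmid : ∀ n, 1 ≤ n → n < m → ∀ x ∈ M, x ∈ 𝒜 n → x = 0 := by
    intro n h1 h2 x hx hn
    have := (hQ x hx).2.1 n h1 h2
    rwa [DirectSum.decompose_of_mem_same 𝒜 hn] at this
  have hfm : ∀ x ∈ M, x ∈ 𝒜 m → x ∈ C := by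
    intro x hx hn
    have := (hQ x hx).2.2
    rwa [DirectSum.decompose_of_mem_same 𝒜 hn] at this
  -- surjectivity on cohomology
  have hsurj : ∀ n, ∀ x ∈ 𝒜 n, dA x = 0 →
      ∃ y z, y ∈ M ∧ y ∈ 𝒜 n ∧ dA y = 0 ∧ z ∈ 𝒜 (n - 1) ∧ x = y + dA z := by
    intro n x hx hdx
    by_cases h0 : n = 0
    · subst h0
      obtain ⟨c, hc⟩ := hker0 x hx hdx
      refine ⟨x, 0, ?_, hx, hdx, zero_mem _, by rw [map_zero, add_zero]⟩
      rw [hc]; exact Submodule.smul_mem _ _ h1M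
    by_cases h1 : n < m
    · obtain ⟨y, hy, hxy⟩ := hH n (by omega) h1 x hx hdx
      exact ⟨0, y, zero_mem _, zero_mem _, by rw [map_zero], hy, by rw [zero_add]; exact hxy⟩
    by_cases h2 : n = m
    · subst h2
      obtain ⟨c, z, hc, hz, hxe⟩ := hdecomp x hx
      have hdc : dA c = 0 := by
        have : dA x = dA c + dA (dA z) := by rw [hxe, map_add]
        rw [hdx, hd2' z, add_zero] at this
        exact this.symm
      exact ⟨c, z, hCM c hc, hCsub c hc, hdc, hz, hxe⟩
    · refine ⟨x, 0, hhigh n (by omega) x hx, hx, hdx, zero_mem _, by rw [map_zero, add_zero]⟩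
  -- injectivity on cohomology
  have hinj : ∀ n, ∀ x, x ∈ M → x ∈ 𝒜 n → (∃ z ∈ 𝒜 (n - 1), x = dA z) →
      ∃ w, w ∈ M ∧ w ∈ 𝒜 (n - 1) ∧ x = dA w := by
    rintro n x hxM hxn ⟨z, hz, hxz⟩
    by_cases h0 : n = 0
    · subst h0
      have hx1 : x ∈ 𝒜 1 := by rw [hxz]; exact hdeg 0 z hz
      have hx0 : x = 0 := by
        have e1 := DirectSum.decompose_of_mem_same 𝒜 hxn
        have e2 := DirectSum.decompose_of_mem_ne 𝒜 hx1 (by omega : (1:ℕ) ≠ 0)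
        rw [e2] at e1; exact e1.symm
      exact ⟨0, zero_mem _, zero_mem _, by rw [map_zero, hx0]⟩
    by_cases h1 : n < m
    · have hx0 : x = 0 := hfmid n (by omega) h1 x hxM hxn
      exact ⟨0, zero_mem _, zero_mem _, by rw [map_zero, hx0]⟩
    by_cases h2 : n = m
    · subst h2
      have hxC : x ∈ C := hfm x hxM hxn
      have hxp : x ∈ p := ⟨z, hz, hxz.symm⟩
      have hx0 : x = 0 := hCd x hxC hxp
      exact ⟨0, zero_mem _, zero_mem _, by rw [map_zero, hx0]⟩
    by_cases h3 : n = m + 1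
    · subst h3
      have hz' : z ∈ 𝒜 m := by
        have : m + 1 - 1 = m := by omega
        rwa [this] at hz
      obtain ⟨c, u, hc, hu, hze⟩ := hdecomp z hz'
      have hxc : x = dA c := by
        rw [hxz, hze, map_add, hd2' u, add_zero]
      refine ⟨c, hCM c hc, ?_, hxc⟩
      have : m + 1 - 1 = m := by omega
      rw [this]; exact hCsub c hc
    · exact ⟨z, hhigh (n - 1) (by omega) z hz, hz, hxz⟩
  -- M is contained in the span of 1 and elements of degree ≥ m
  have hle : ∀ x ∈ M, x ∈ Submodule.span k ({1} ∪ ⋃ n, ((𝒜 (n + m) : Submodule k A) : Set A)) := by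
    intro x hx
    refine Submodule.span_le.mpr ?_ hx
    rintro g ((hg | hg) | hg)
    · exact Submodule.subset_span (Or.inl hg)
    · refine Submodule.subset_span (Or.inr (Set.mem_iUnion.mpr ⟨0, ?_⟩))
      have : 0 + m = m := by omega
      rw [this]; exact hCsub g hg
    · obtain ⟨n, hn⟩ := Set.mem_iUnion.mp hg
      refine Submodule.subset_span (Or.inr (Set.mem_iUnion.mpr ⟨n + 1, ?_⟩))
      have : n + 1 + m = n + m + 1 := by omega
      rw [this]; exact hn
  exact ⟨M, h1M, hmul, hdM, hgr, hhigh, hf0, hfmid, hsurj, hinj, hle⟩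


/-- given unital dg algebras `A`, `B` (ℕ-graded, differentials of degree `+1`
squaring to zero and satisfying the graded Leibniz rule) over a field `k`, a morphism
`φ : A → B` of unital dg algebras, and the cohomological hypotheses
`ker d_A ∩ A⁰ = k·1`, `H¹(A) = 0`, `H²(A) = 0`, `ker d_B ∩ B⁰ = k·1`, `H¹(B) = 0`,
there exist dg subalgebras `𝒜 ⊆ A`, `ℬ ⊆ B` (graded, unital, closed under the
differentials) with `𝒜⁰ = k·1`, `𝒜¹ = 𝒜² = 0`, `ℬ⁰ = k·1`, `ℬ¹ = 0`, whose inclusions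
are quasi-isomorphisms, and with `φ(𝒜) ⊆ ℬ`. -/
theorem stmt4 {k A B : Type} [Field k] [Ring A] [Algebra k A] [Ring B] [Algebra k B]
    (𝒜 : ℕ → Submodule k A) (ℬ : ℕ → Submodule k B)
    [GradedAlgebra 𝒜] [GradedAlgebra ℬ]
    (dA : A →ₗ[k] A) (dB : B →ₗ[k] B)
    (hdA2 : dA ∘ₗ dA = 0) (hdB2 : dB ∘ₗ dB = 0)
    (hdAdeg : ∀ (n : ℕ) (x : A), x ∈ 𝒜 n → dA x ∈ 𝒜 (n + 1))
    (hdBdeg : ∀ (n : ℕ) (x : B), x ∈ ℬ n → dB x ∈ ℬ (n + 1))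
    (hLeibA : ∀ (m : ℕ) (x y : A), x ∈ 𝒜 m →
      dA (x * y) = dA x * y + ((-1 : k) ^ m) • (x * dA y))
    (hLeibB : ∀ (m : ℕ) (x y : B), x ∈ ℬ m →
      dB (x * y) = dB x * y + ((-1 : k) ^ m) • (x * dB y))
    (φ : A →ₐ[k] B)
    (hφd : ∀ x, φ (dA x) = dB (φ x))
    (hφdeg : ∀ (n : ℕ) (x : A), x ∈ 𝒜 n → φ x ∈ ℬ n)
    -- `ker d_A ∩ A⁰ = k·1` and `ker d_B ∩ B⁰ = k·1`
    (hker0A : ∀ x ∈ 𝒜 0, dA x = 0 → ∃ c : k, x = c • (1 : A))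
    (hker0B : ∀ x ∈ ℬ 0, dB x = 0 → ∃ c : k, x = c • (1 : B))
    -- `H¹(A) = 0`, `H²(A) = 0`, `H¹(B) = 0`
    (hH1A : ∀ x ∈ 𝒜 1, dA x = 0 → ∃ y ∈ 𝒜 0, x = dA y)
    (hH2A : ∀ x ∈ 𝒜 2, dA x = 0 → ∃ y ∈ 𝒜 1, x = dA y)
    (hH1B : ∀ x ∈ ℬ 1, dB x = 0 → ∃ y ∈ ℬ 0, x = dB y) :
    ∃ (SA : Subalgebra k A) (SB : Subalgebra k B),
      -- dg subalgebras: closed under the differential and graded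
      (∀ x ∈ SA, dA x ∈ SA) ∧ (∀ x ∈ SB, dB x ∈ SB) ∧
      (∀ x ∈ SA, ∀ n : ℕ, ((DirectSum.decompose 𝒜 x n : ↥(𝒜 n)) : A) ∈ SA) ∧
      (∀ x ∈ SB, ∀ n : ℕ, ((DirectSum.decompose ℬ x n : ↥(ℬ n)) : B) ∈ SB) ∧
      -- (1) `𝒜⁰ = k·1`, `𝒜¹ = 0`, `𝒜² = 0`, `ℬ⁰ = k·1`, `ℬ¹ = 0`
      (∀ x, x ∈ SA → x ∈ 𝒜 0 → ∃ c : k, x = c • (1 : A)) ∧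
      (∀ x, x ∈ SA → x ∈ 𝒜 1 → x = 0) ∧
      (∀ x, x ∈ SA → x ∈ 𝒜 2 → x = 0) ∧
      (∀ x, x ∈ SB → x ∈ ℬ 0 → ∃ c : k, x = c • (1 : B)) ∧
      (∀ x, x ∈ SB → x ∈ ℬ 1 → x = 0) ∧
      -- (2) the inclusions are quasi-isomorphisms (in every degree `n`):
      -- surjectivity on cohomology
      (∀ (n : ℕ), ∀ x ∈ 𝒜 n, dA x = 0 →
        ∃ y z, y ∈ SA ∧ y ∈ 𝒜 n ∧ dA y = 0 ∧ z ∈ 𝒜 (n - 1) ∧ x = y + dA z) ∧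
      (∀ (n : ℕ), ∀ x ∈ ℬ n, dB x = 0 →
        ∃ y z, y ∈ SB ∧ y ∈ ℬ n ∧ dB y = 0 ∧ z ∈ ℬ (n - 1) ∧ x = y + dB z) ∧
      -- injectivity on cohomology
      (∀ (n : ℕ), ∀ x, x ∈ SA → x ∈ 𝒜 n → (∃ z ∈ 𝒜 (n - 1), x = dA z) →
        ∃ w, w ∈ SA ∧ w ∈ 𝒜 (n - 1) ∧ x = dA w) ∧
      (∀ (n : ℕ), ∀ x, x ∈ SB → x ∈ ℬ n → (∃ z ∈ ℬ (n - 1), x = dB z) →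
        ∃ w, w ∈ SB ∧ w ∈ ℬ (n - 1) ∧ x = dB w) ∧
      -- (3) `φ(𝒜) ⊆ ℬ`
      (∀ x ∈ SA, φ x ∈ SB) := by
  -- d of 1 is 0
  have hd1A : dA 1 = 0 := by
    have h := hLeibA 0 1 1 (SetLike.one_mem_graded 𝒜)
    simp only [one_mul, mul_one, pow_zero, one_smul] at h
    exact (left_eq_add.mp h)
  have hd1B : dB 1 = 0 := by
    have h := hLeibB 0 1 1 (SetLike.one_mem_graded ℬ)
    simp only [one_mul, mul_one, pow_zero, one_smul] at h
    exact (left_eq_add.mp h)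
  obtain ⟨MA, h1A, hmulA, hdMA, hgrA, hhighA, hf0A, hfmidA, hsurjA, hinjA, hleA⟩ :=
    construct 𝒜 dA 3 (by omega) hdA2 hd1A hdAdeg hker0A (by
      intro j hj1 hj3
      interval_cases j
      · exact hH1A
      · exact hH2A)
  obtain ⟨MB, h1B, hmulB, hdMB, hgrB, hhighB, hf0B, hfmidB, hsurjB, hinjB, hleB⟩ :=
    construct ℬ dB 2 (by omega) hdB2 hd1B hdBdeg hker0B (by
      intro j hj1 hj2
      interval_cases j
      exact hH1B)
  refine ⟨MA.toSubalgebra h1A (fun x y hx hy => hmulA x hx y hy),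
          MB.toSubalgebra h1B (fun x y hx hy => hmulB x hx y hy),
          hdMA, hdMB, hgrA, hgrB, hf0A,
          (fun x hx h1 => hfmidA 1 (by omega) (by omega) x hx h1),
          (fun x hx h2 => hfmidA 2 (by omega) (by omega) x hx h2),
          hf0B,
          (fun x hx h1 => hfmidB 1 (by omega) (by omega) x hx h1),
          hsurjA, hsurjB, hinjA, hinjB, ?_⟩
  -- φ maps MA into MB
  intro x hx
  have hx' := hleA x hx
  clear hx
  induction hx' using Submodule.span_induction with
  | mem g hg =>
    rcases hg with hg | hg
    · rw [Set.mem_singleton_iff] at hg; subst hg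
      rw [map_one]; exact h1B
    · obtain ⟨n, hn⟩ := Set.mem_iUnion.mp hg
      exact hhighB (n + 3) (by omega) _ (hφdeg (n + 3) g hn)
  | zero => rw [map_zero]; exact zero_mem _
  | add a b _ _ ha hb => rw [map_add]; exact add_mem ha hb
  | smul r a _ h => rw [map_smul]; exact Submodule.smul_mem _ _ h
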